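/- Let T be an R-tree with an isometric action of F_N with dense orbits, equipped with a finite supporting subtree K, and suppose μ, μ' are two ergodic invariant length measures on T with nondegenerate supports in K. If Supp(μ|_K) ∩ Supp(μ'|_K) contains a nondegenerate arc, then Supp(μ|_K) = Supp(μ'|_K). -/

import Mathlib

open Pointwise

/-- The segment `[x,y]` in a metric space (in an `ℝ`-tree this is the arc from `x` to `y`). -/
def seg {T : Type*} [MetricSpace T] (x y : T) : Set T :=
  {z : T | dist x z + dist z y = dist x y}

/-- An `ℝ`-tree: a geodesic metric space that is `0`-hyperbolic (four-point condition),
equivalently any two points are joined by a unique arc, isometric to a real interval. -/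
def IsRTree (T : Type*) [MetricSpace T] : Prop :=
  (∀ x y : T, ∃ f : ℝ → T, f 0 = x ∧ f (dist x y) = y ∧
      ∀ s ∈ Set.Icc (0 : ℝ) (dist x y), ∀ t ∈ Set.Icc (0 : ℝ) (dist x y),
        dist (f s) (f t) = |s - t|) ∧
  ∀ x y z w : T, dist x y + dist z w ≤ max (dist x z + dist y w) (dist x w + dist y z)

/-- A subtree: a convex subset. -/
def IsSubtree {T : Type*} [MetricSpace T] (Y : Set T) : Prop :=
  ∀ x ∈ Y, ∀ y ∈ Y, seg x y ⊆ Y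

/-- An arc: a subset isometric to a nondegenerate closed real interval. -/
def IsArc {T : Type*} [MetricSpace T] (A : Set T) : Prop :=
  ∃ (a b : ℝ) (f : ℝ → T), a < b ∧
    (∀ s ∈ Set.Icc a b, ∀ t ∈ Set.Icc a b, dist (f s) (f t) = |s - t|) ∧
    A = f '' Set.Icc a b

/-- A transverse family: a `G`-invariant collection of nondegenerate subtrees, any two
distinct members of which intersect in at most one point. -/
structure IsTransverseFamily (G : Type*) {T : Type*} [Group G] [MulAction G T]
    [MetricSpace T] (F : Set (Set T)) : Prop where
  invariant : ∀ (g : G), ∀ Y ∈ F, g • Y ∈ F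
  subtree : ∀ Y ∈ F, IsSubtree Y
  nondeg : ∀ Y ∈ F, ¬Y.Subsingleton
  transverse : ∀ Y ∈ F, ∀ Y' ∈ F, Y ≠ Y' → (Y ∩ Y').Subsingleton

open MeasureTheory

/-- A finite subtree: a finite union of segments. -/
def IsFiniteSubtree {T : Type*} [MetricSpace T] (K : Set T) : Prop :=
  ∃ (n : ℕ) (p q : Fin n → T), K = ⋃ i, seg (p i) (q i)

/-- A supporting subtree: every arc of `T` is covered by finitely many `G`-translates. -/
def IsSupporting (G : Type*) {T : Type*} [Group G] [MulAction G T] [MetricSpace T]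
    (K : Set T) : Prop :=
  ∀ A : Set T, IsArc A → ∃ (r : ℕ) (g : Fin r → G), A ⊆ ⋃ i, g i • K

/-- The support of the restriction `μ|_K`: points of `K` all of whose neighborhoods meet `K`
in a set of positive `μ`-measure. -/
def suppIn {T : Type*} [MetricSpace T] [MeasurableSpace T] (μ : Measure T) (K : Set T) :
    Set T :=
  {x : T | x ∈ K ∧ ∀ U : Set T, IsOpen U → x ∈ U → μ (U ∩ K) ≠ 0}

/-- An invariant measure is ergodic if every invariant measurable set is null or conull. -/
def IsErgodicMeasure (G : Type*) {T : Type*} [Group G] [MulAction G T] [MetricSpace T]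
    [MeasurableSpace T] (μ : Measure T) : Prop :=
  ∀ A : Set T, MeasurableSet A → (∀ g : G, g • A = A) → μ A = 0 ∨ μ Aᶜ = 0

section Aux

variable {T : Type*} [MetricSpace T]

lemma left_mem_seg (x y : T) : x ∈ seg x y := by simp [seg]

lemma right_mem_seg (x y : T) : y ∈ seg x y := by simp [seg]

lemma seg_comm (x y : T) : seg x y = seg y x := by
  ext z; simp only [seg, Set.mem_setOf_eq, dist_comm x z, dist_comm z y, dist_comm x y]
  constructor <;> intro h <;> linarith

lemma isClosed_seg (x y : T) : IsClosed (seg x y) :=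
  isClosed_eq (by fun_prop) continuous_const

/-- Rigidity: distances in a segment are computed by the coordinate `dist x ·`. -/
lemma dist_eq_of_mem_seg (hT : IsRTree T) {x y z w : T} (hz : z ∈ seg x y)
    (hw : w ∈ seg x y) : dist z w = |dist x z - dist x w| := by
  have h4 := hT.2 z w x y
  have hz' : dist x z + dist z y = dist x y := hz
  have hw' : dist x w + dist w y = dist x y := hw
  have hle : dist z w ≤ |dist x z - dist x w| := by
    rcases le_max_iff.1 h4 with h | h <;>
    · rw [abs_sub_comm] <;> rw [le_abs] <;> simp only [dist_comm] at *
      first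
        | (left; linarith) | (right; linarith)
  have hge : |dist x z - dist x w| ≤ dist z w := by
    have := abs_dist_sub_le z w x
    rwa [dist_comm z x, dist_comm w x] at this
  exact le_antisymm hle hge

example : True := trivial

/-- Segments are convex. -/
lemma seg_subtree (hT : IsRTree T) (x y : T) : IsSubtree (seg x y) := by
  intro u hu v hv m hm
  have hd : dist u v = |dist x u - dist x v| := dist_eq_of_mem_seg hT hu hv
  have hu' : dist x u + dist u y = dist x y := hu
  have hv' : dist x v + dist v y = dist x y := hv
  have hm' : dist u m + dist m v = dist u v := hm
  have h1 : dist x y ≤ dist x m + dist m y := dist_triangle x m y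
  have h2 : dist x m ≤ dist x u + dist u m := dist_triangle x u m
  have h3 : dist m y ≤ dist m v + dist v y := dist_triangle m v y
  have h2' : dist x m ≤ dist x v + dist m v := by
    have := dist_triangle x v m; rw [dist_comm v m] at this; exact this
  have h3' : dist m y ≤ dist u m + dist u y := by
    have := dist_triangle m u y; rw [dist_comm m u] at this; exact this
  have : dist x m + dist m y = dist x y := by
    rcases abs_cases (dist x u - dist x v) with ⟨he, _⟩ | ⟨he, _⟩ <;> linarith
  exact this

/-- Points of an `ℝ`-tree segment between images of an isometric embedding are on the arc. -/
lemma mem_image_of_mem_seg (hT : IsRTree T) {a b : ℝ} (hab : a ≤ b) {h : ℝ → T}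
    (hiso : ∀ s ∈ Set.Icc a b, ∀ t ∈ Set.Icc a b, dist (h s) (h t) = |s - t|)
    {z : T} (hz : z ∈ seg (h a) (h b)) : z ∈ h '' Set.Icc a b := by
  have hmem : a ∈ Set.Icc a b := Set.left_mem_Icc.2 hab
  have hmem' : b ∈ Set.Icc a b := Set.right_mem_Icc.2 hab
  have hdab : dist (h a) (h b) = b - a := by
    rw [hiso a hmem b hmem', abs_of_nonpos (by linarith)]; ring
  set r : ℝ := a + dist (h a) z with hr
  have hz' : dist (h a) z + dist z (h b) = dist (h a) (h b) := hz
  have hr1 : r ∈ Set.Icc a b := by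
    constructor
    · have := dist_nonneg (x := h a) (y := z); linarith
    · have := dist_nonneg (x := z) (y := h b); linarith
  have e1 : dist (h a) (h r) = r - a := by
    rw [hiso a hmem r hr1, abs_sub_comm, abs_of_nonneg (by linarith [hr1.1])]
  have e2 : dist (h r) (h b) = b - r := by
    rw [hiso r hr1 b hmem', abs_of_nonpos (by linarith [hr1.2])]; ring
  have hhr : h r ∈ seg (h a) (h b) := by
    show dist (h a) (h r) + dist (h r) (h b) = dist (h a) (h b)
    rw [e1, e2, hdab]; ring
  have key : dist z (h r) = |dist (h a) z - dist (h a) (h r)| :=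
    dist_eq_of_mem_seg hT hz hhr
  have hzr : dist z (h r) = 0 := by
    rw [key, e1]
    have : r - a = dist (h a) z := by rw [hr]; ring
    rw [this]; simp
  exact ⟨r, hr1, (dist_eq_zero.1 hzr).symm⟩

/-- Arcs are convex. -/
lemma arc_subtree (hT : IsRTree T) {A : Set T} (hA : IsArc A) : IsSubtree A := by
  obtain ⟨a, b, h, hab, hiso, rfl⟩ := hA
  rintro u ⟨s, hs, rfl⟩ v ⟨t, ht, rfl⟩ z hz
  rcases le_total s t with hst | hst
  · have hiso' : ∀ s' ∈ Set.Icc s t, ∀ t' ∈ Set.Icc s t, dist (h s') (h t') = |s' - t'| :=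
      fun s' hs' t' ht' => hiso s' (⟨hs.1.trans hs'.1, hs'.2.trans ht.2⟩)
        t' (⟨hs.1.trans ht'.1, ht'.2.trans ht.2⟩)
    have := mem_image_of_mem_seg hT hst hiso' hz
    obtain ⟨r, hr, rfl⟩ := this
    exact ⟨r, ⟨hs.1.trans hr.1, hr.2.trans ht.2⟩, rfl⟩
  · rw [seg_comm] at hz
    have hiso' : ∀ s' ∈ Set.Icc t s, ∀ t' ∈ Set.Icc t s, dist (h s') (h t') = |s' - t'| :=
      fun s' hs' t' ht' => hiso s' (⟨ht.1.trans hs'.1, hs'.2.trans hs.2⟩)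
        t' (⟨ht.1.trans ht'.1, ht'.2.trans hs.2⟩)
    obtain ⟨r, hr, rfl⟩ := mem_image_of_mem_seg hT hst hiso' hz
    exact ⟨r, ⟨ht.1.trans hr.1, hr.2.trans hs.2⟩, rfl⟩

/-- Balls are convex in an `ℝ`-tree. -/
lemma ball_subtree (hT : IsRTree T) (c : T) (r : ℝ) : IsSubtree (Metric.ball c r) := by
  intro u hu v hv m hm
  have hm' : dist u m + dist m v = dist u v := hm
  have h4 := hT.2 c m u v
  rw [Metric.mem_ball, dist_comm] at hu hv ⊢
  rcases le_max_iff.1 h4 with h | h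
  · have : dist c m ≤ dist c u := by linarith [dist_nonneg (x := u) (y := m)]
    linarith
  · have : dist c m ≤ dist c v := by linarith [dist_nonneg (x := m) (y := v), dist_comm m u]
    linarith

lemma inter_subtree {Y Z : Set T} (hY : IsSubtree Y) (hZ : IsSubtree Z) :
    IsSubtree (Y ∩ Z) := fun x hx y hy z hz => ⟨hY x hx.1 y hy.1 hz, hZ x hx.2 y hy.2 hz⟩




/-- Key geometric lemma: a nondegenerate arc contained in `suppIn ν K` has positive
`ν`-measure, when `K` is a finite union of segments. -/
lemma arc_measure_ne_zero {T : Type*} [MetricSpace T] [MeasurableSpace T]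
    (hT : IsRTree T) {K : Set T} (hKfin : IsFiniteSubtree K) (ν : Measure T)
    {B : Set T} (hB : IsArc B) (hBs : B ⊆ suppIn ν K) : ν B ≠ 0 := by
  obtain ⟨a, b, h, hab, hiso, rfl⟩ := hB
  obtain ⟨n, p, q, hK⟩ := hKfin
  set σ : Fin n → Set T := fun i => seg (p i) (q i) with hσ
  set J : Fin n → Set ℝ := fun i => {s | s ∈ Set.Icc a b ∧ h s ∈ σ i} with hJ
  have hFfin : (({a, b} : Set ℝ) ∪ ⋃ i, {sInf (J i), sSup (J i)}).Finite :=
    ((Set.finite_singleton _).insert _).union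
      (Set.finite_iUnion fun i => (Set.finite_singleton _).insert _)
  obtain ⟨t, htIoo, htF⟩ := ((Set.Ioo_infinite hab).diff hFfin).nonempty
  simp only [Set.mem_union, Set.mem_insert_iff, Set.mem_singleton_iff, Set.mem_iUnion,
    not_or, not_exists] at htF
  have htIcc : t ∈ Set.Icc a b := ⟨le_of_lt htIoo.1, le_of_lt htIoo.2⟩
  have hms : h t ∈ suppIn ν K := hBs ⟨t, htIcc, rfl⟩
  have key : ∀ i, ∃ ε > 0, ∀ z ∈ σ i, dist (h t) z < ε → z ∈ h '' Set.Icc a b := by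
    intro i
    by_cases hti : h t ∈ σ i
    · have htJ : t ∈ J i := ⟨htIcc, hti⟩
      have hne : (J i).Nonempty := ⟨t, htJ⟩
      have hJIcc : J i ⊆ Set.Icc a b := fun s hs => hs.1
      have hbdd : BddAbove (J i) := (bddAbove_Icc (a := a) (b := b)).mono hJIcc
      have hbdd' : BddBelow (J i) := (bddBelow_Icc).mono hJIcc
      have h1 : sInf (J i) < t :=
        lt_of_le_of_ne (csInf_le hbdd' htJ) (fun e => (htF.2 i).1 e.symm)
      have h2 : t < sSup (J i) :=
        lt_of_le_of_ne (le_csSup hbdd htJ) (fun e => (htF.2 i).2 e)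
      obtain ⟨c, hcJ, hct⟩ := exists_lt_of_csInf_lt hne h1
      obtain ⟨d, hdJ, htd⟩ := exists_lt_of_lt_csSup hne h2
      have hcIcc := hcJ.1; have hdIcc := hdJ.1
      refine ⟨min (t - c) (d - t), lt_min_iff.2 ⟨by linarith, by linarith⟩, ?_⟩
      intro z hz hdist
      set α := dist (p i) (h c) with hα
      set β := dist (p i) (h d) with hβ
      set τ := dist (p i) (h t) with hτ
      set ζ := dist (p i) z with hζ
      have e1 : dist (h c) (h t) = t - c := by
        rw [hiso c hcIcc t htIcc, abs_of_nonpos (by linarith)]; ring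
      have e2 : dist (h t) (h d) = d - t := by
        rw [hiso t htIcc d hdIcc, abs_of_nonpos (by linarith)]; ring
      have e3 : dist (h c) (h d) = d - c := by
        rw [hiso c hcIcc d hdIcc, abs_of_nonpos (by linarith)]; ring
      have f1 : |α - τ| = t - c := by
        have := dist_eq_of_mem_seg hT hcJ.2 hti; rw [e1] at this; exact this.symm
      have f2 : |τ - β| = d - t := by
        have := dist_eq_of_mem_seg hT hti hdJ.2; rw [e2] at this; exact this.symm
      have f3 : |α - β| = d - c := by
        have := dist_eq_of_mem_seg hT hcJ.2 hdJ.2; rw [e3] at this; exact this.symm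
      have g1 : dist (h c) z = |α - ζ| := dist_eq_of_mem_seg hT hcJ.2 hz
      have g2 : dist z (h d) = |ζ - β| := dist_eq_of_mem_seg hT hz hdJ.2
      have g3 : |τ - ζ| < min (t - c) (d - t) := by
        have := dist_eq_of_mem_seg hT hti hz; rw [← this]; exact hdist
      have g3a : |τ - ζ| < t - c := lt_of_lt_of_le g3 (min_le_left _ _)
      have g3b : |τ - ζ| < d - t := lt_of_lt_of_le g3 (min_le_right _ _)
      have habs1 : τ - α ≤ |α - τ| := by rw [abs_sub_comm]; exact le_abs_self _
      have habs1' : α - τ ≤ |α - τ| := le_abs_self _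
      have habs2 : β - τ ≤ |τ - β| := by rw [abs_sub_comm]; exact le_abs_self _
      have habs2' : τ - β ≤ |τ - β| := le_abs_self _
      have habs3 : ζ - τ ≤ |τ - ζ| := by rw [abs_sub_comm]; exact le_abs_self _
      have habs4 : τ - ζ ≤ |τ - ζ| := le_abs_self _
      have hseg : z ∈ seg (h c) (h d) := by
        show dist (h c) z + dist z (h d) = dist (h c) (h d)
        rw [g1, g2, e3]
        rcases le_total α β with hord | hord
        · have hA : |α - β| = β - α := by rw [abs_of_nonpos (by linarith)]; ring
          have hαζ : α ≤ ζ := by linarith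
          have hζβ : ζ ≤ β := by linarith
          rw [abs_of_nonpos (by linarith : α - ζ ≤ 0),
            abs_of_nonpos (by linarith : ζ - β ≤ 0)]
          linarith
        · have hA : |α - β| = α - β := abs_of_nonneg (by linarith)
          have hβζ : β ≤ ζ := by linarith
          have hζα : ζ ≤ α := by linarith
          rw [abs_of_nonneg (by linarith : 0 ≤ α - ζ),
            abs_of_nonneg (by linarith : 0 ≤ ζ - β)]
          linarith
      have hiso' : ∀ s' ∈ Set.Icc c d, ∀ t' ∈ Set.Icc c d, dist (h s') (h t') = |s' - t'| :=
        fun s' hs' t' ht' => hiso s' ⟨hcIcc.1.trans hs'.1, hs'.2.trans hdIcc.2⟩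
          t' ⟨hcIcc.1.trans ht'.1, ht'.2.trans hdIcc.2⟩
      obtain ⟨r, hr, rfl⟩ := mem_image_of_mem_seg hT (by linarith : c ≤ d) hiso' hseg
      exact ⟨r, ⟨hcIcc.1.trans hr.1, hr.2.trans hdIcc.2⟩, rfl⟩
    · have hσne : (σ i).Nonempty := ⟨p i, left_mem_seg _ _⟩
      have hcl : IsClosed (σ i) := isClosed_seg _ _
      have hpos : 0 < Metric.infDist (h t) (σ i) :=
        (hcl.notMem_iff_infDist_pos hσne).1 hti
      refine ⟨Metric.infDist (h t) (σ i), hpos, fun z hz hd => absurd hd (not_lt.2 ?_)⟩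
      exact Metric.infDist_le_dist_of_mem hz
  choose ε hε hball using key
  have hmK : h t ∈ K := hms.1
  have : ∃ i : Fin n, True := by
    rw [hK] at hmK
    obtain ⟨i, -⟩ := Set.mem_iUnion.1 hmK
    exact ⟨i, trivial⟩
  obtain ⟨i₀, -⟩ := this
  have hFinNe : (Finset.univ : Finset (Fin n)).Nonempty := ⟨i₀, Finset.mem_univ _⟩
  set ε₀ := Finset.univ.inf' hFinNe ε with hε₀def
  have hε₀ : 0 < ε₀ := (Finset.lt_inf'_iff hFinNe).2 fun i _ => hε i
  have hsub : Metric.ball (h t) ε₀ ∩ K ⊆ h '' Set.Icc a b := by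
    rintro z ⟨hzb, hzK⟩
    rw [hK] at hzK
    obtain ⟨i, hzi⟩ := Set.mem_iUnion.1 hzK
    refine hball i z hzi ?_
    rw [Metric.mem_ball, dist_comm] at hzb
    exact lt_of_lt_of_le hzb (Finset.inf'_le _ (Finset.mem_univ i))
  intro h0
  exact hms.2 (Metric.ball (h t) ε₀) Metric.isOpen_ball (Metric.mem_ball_self hε₀)
    (le_antisymm (h0 ▸ measure_mono hsub) (zero_le))


section Measures

variable {T : Type*} [MetricSpace T] [MeasurableSpace T] [BorelSpace T]
  {G : Type*} [Group G] [MulAction G T] [Countable G]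

lemma smul_set_measurable (hiso : ∀ g : G, Isometry fun x : T => g • x)
    {s : Set T} (hs : MeasurableSet s) (g : G) : MeasurableSet (g • s) := by
  have : g • s = (fun x : T => g⁻¹ • x) ⁻¹' s := by
    ext x; exact Set.mem_smul_set_iff_inv_smul_mem
  rw [this]
  exact (hiso g⁻¹).continuous.measurable hs

lemma measure_smul_set' (μ : Measure T) [SMulInvariantMeasure G T μ]
    {s : Set T} (hs : MeasurableSet s) (g : G) : μ (g • s) = μ s := by
  have : g • s = (fun x : T => g⁻¹ • x) ⁻¹' s := by
    ext x; exact Set.mem_smul_set_iff_inv_smul_mem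
  rw [this]
  exact SMulInvariantMeasure.measure_preimage_smul g⁻¹ hs

lemma smul_saturation_eq (C : Set T) (g : G) : g • ⋃ g' : G, g' • C = ⋃ g' : G, g' • C := by
  rw [Set.smul_set_iUnion]
  ext x
  simp only [Set.mem_iUnion]
  constructor
  · rintro ⟨g', hg'⟩
    exact ⟨g * g', by rwa [mul_smul]⟩
  · rintro ⟨g', hg'⟩
    exact ⟨g⁻¹ * g', by rwa [← mul_smul, ← mul_assoc, mul_inv_cancel, one_mul]⟩

/-- If an ergodic invariant measure has an atom, then its support in `K` is finite,
contradicting the existence of an arc in the support. -/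
lemma no_atoms (hiso : ∀ g : G, Isometry fun x : T => g • x)
    {K : Set T} (hKfin : IsFiniteSubtree K) (μ : Measure T)
    [SMulInvariantMeasure G T μ] (hfin : ∀ x y : T, μ (seg x y) < ⊤)
    (herg : IsErgodicMeasure G μ)
    {A : Set T} (hA : IsArc A) (hAs : A ⊆ suppIn μ K)
    {pt : T} (hatom : μ {pt} ≠ 0) : False := by
  classical
  set P : Set T := ⋃ g : G, ({g • pt} : Set T) with hP
  have hPmeas : MeasurableSet P :=
    MeasurableSet.iUnion fun g => measurableSet_singleton _
  have hPinv : ∀ g : G, g • P = P := by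
    intro g
    rw [hP, Set.smul_set_iUnion]
    ext x
    simp only [Set.mem_iUnion, Set.smul_set_singleton, Set.mem_singleton_iff]
    constructor
    · rintro ⟨g', rfl⟩; exact ⟨g * g', (mul_smul g g' pt).symm⟩
    · rintro ⟨g', rfl⟩
      exact ⟨g⁻¹ * g', by rw [← mul_smul, ← mul_assoc, mul_inv_cancel, one_mul]⟩
  have hPpos : μ P ≠ 0 := by
    intro h0
    refine hatom (le_antisymm (le_trans (measure_mono ?_) h0.le) (zero_le))
    intro x hx
    exact Set.mem_iUnion.2 ⟨1, by simpa [one_smul] using hx⟩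
  have hPco : μ Pᶜ = 0 := (herg P hPmeas hPinv).resolve_left hPpos
  -- μ K is finite
  obtain ⟨n, p, q, hK⟩ := hKfin
  have hKfin' : μ K < ⊤ := by
    rw [hK]
    refine lt_of_le_of_lt (measure_iUnion_le _) ?_
    rw [tsum_fintype]
    exact ENNReal.sum_lt_top.2 fun i _ => hfin _ _
  -- each point of P has the same positive mass
  have hmass : ∀ x ∈ P, μ {x} = μ {pt} := by
    intro x hx
    obtain ⟨g, hg⟩ := Set.mem_iUnion.1 hx
    rw [Set.mem_singleton_iff] at hg
    subst hg
    have : ({g • pt} : Set T) = g • ({pt} : Set T) := (Set.smul_set_singleton).symm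
    rw [this, measure_smul_set' μ (measurableSet_singleton _) g]
  -- P ∩ K is finite
  have hFfin : (P ∩ K).Finite := by
    by_contra hinf
    have e := Set.Infinite.natEmbedding _ hinf
    have hdisj : Pairwise (Function.onFun Disjoint fun m : ℕ => ({(e m : T)} : Set T)) := by
      intro m m' hmm'
      simp only [Function.onFun, Set.disjoint_singleton]
      exact fun hc => hmm' (e.injective (Subtype.ext hc))
    have hUmeas : ∀ m : ℕ, MeasurableSet ({(e m : T)} : Set T) :=
      fun m => measurableSet_singleton _
    have hsum : μ (⋃ m : ℕ, ({(e m : T)} : Set T)) = ∑' m : ℕ, μ {(e m : T)} :=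
      measure_iUnion hdisj hUmeas
    have htop : μ (⋃ m : ℕ, ({(e m : T)} : Set T)) = ⊤ := by
      rw [hsum]
      have : ∀ m : ℕ, μ {(e m : T)} = μ {pt} := fun m => hmass _ (e m).2.1
      simp only [this]
      exact ENNReal.tsum_const_eq_top_of_ne_zero hatom
    have hle : μ (⋃ m : ℕ, ({(e m : T)} : Set T)) ≤ μ K :=
      measure_mono (Set.iUnion_subset fun m x hx => by
        rw [Set.mem_singleton_iff] at hx; subst hx; exact (e m).2.2)
    rw [htop] at hle
    exact absurd (lt_of_le_of_lt hle hKfin') (lt_irrefl _)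
  -- the support is contained in P ∩ K
  have hsupp_sub : suppIn μ K ⊆ P ∩ K := by
    intro x hx
    by_contra hxF
    have hcl : IsClosed (P ∩ K) := hFfin.isClosed
    obtain ⟨ε, hε, hball⟩ := Metric.isOpen_iff.1 hcl.isOpen_compl x hxF
    refine hx.2 (Metric.ball x ε) Metric.isOpen_ball (Metric.mem_ball_self hε) ?_
    have hsplit : Metric.ball x ε ∩ K ⊆ Pᶜ := by
      rintro z ⟨hzb, hzK⟩
      intro hzP
      exact hball hzb ⟨hzP, hzK⟩
    exact le_antisymm (le_trans (measure_mono hsplit) hPco.le) (zero_le)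
  -- but the support contains an infinite arc
  obtain ⟨a, b, h, hab, hiso', rfl⟩ := hA
  have hinj : Set.InjOn h (Set.Icc a b) := by
    intro s hs t ht he
    have := hiso' s hs t ht
    rw [he, dist_self] at this
    have := this.symm
    rwa [abs_eq_zero, sub_eq_zero] at this
  have hAinf : (h '' Set.Icc a b).Infinite :=
    (Set.Icc_infinite hab).image hinj
  exact hAinf (hFfin.subset (hAs.trans hsupp_sub))

end Measures

lemma smul_subtree {T : Type*} [MetricSpace T] {G : Type*} [Group G] [MulAction G T]
    (hiso : ∀ g : G, Isometry fun x : T => g • x) {Y : Set T} (hY : IsSubtree Y)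
    (g : G) : IsSubtree (g • Y) := by
  rintro _ ⟨u, hu, rfl⟩ _ ⟨v, hv, rfl⟩ z hz
  have hz' : g⁻¹ • z ∈ seg u v := by
    have h1 : dist u (g⁻¹ • z) = dist (g • u) z := by
      have := (hiso g).dist_eq u (g⁻¹ • z)
      rw [smul_inv_smul] at this
      exact this.symm
    have h2 : dist (g⁻¹ • z) v = dist z (g • v) := by
      have := (hiso g).dist_eq (g⁻¹ • z) v
      rw [smul_inv_smul] at this
      exact this.symm
    have h3 : dist u v = dist (g • u) (g • v) := ((hiso g).dist_eq u v).symm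
    show dist u (g⁻¹ • z) + dist (g⁻¹ • z) v = dist u v
    rw [h1, h2, h3]
    exact hz
  exact ⟨g⁻¹ • z, hY u hu v hv hz', smul_inv_smul g z⟩

section Main

variable {T : Type*} [MetricSpace T] [MeasurableSpace T] [BorelSpace T]
  {G : Type*} [Group G] [MulAction G T] [Countable G]

lemma suppIn_subset_suppIn (hT : IsRTree T) (hiso : ∀ g : G, Isometry fun x : T => g • x)
    {K : Set T} (hKsub : IsSubtree K) (hKfin : IsFiniteSubtree K)
    (μ μ' : Measure T) [SMulInvariantMeasure G T μ] [SMulInvariantMeasure G T μ']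
    (hfin : ∀ x y : T, μ (seg x y) < ⊤) (herg : IsErgodicMeasure G μ)
    {A : Set T} (hA : IsArc A) (hA1 : A ⊆ suppIn μ K) (hA2 : A ⊆ suppIn μ' K) :
    suppIn μ K ⊆ suppIn μ' K := by
  have hKcl : IsClosed K := by
    obtain ⟨n, p, q, hKeq⟩ := hKfin
    rw [hKeq]
    exact isClosed_iUnion_of_finite fun i => isClosed_seg _ _
  intro x hx
  refine ⟨hx.1, fun U hU hxU h0 => ?_⟩
  obtain ⟨ε, hε, hball⟩ := Metric.isOpen_iff.1 hU x hxU
  set C : Set T := Metric.ball x ε ∩ K with hC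
  have hCmeas : MeasurableSet C := Metric.isOpen_ball.measurableSet.inter hKcl.measurableSet
  have hC0 : μ C ≠ 0 := hx.2 _ Metric.isOpen_ball (Metric.mem_ball_self hε)
  have hC'0 : μ' C = 0 := by
    refine le_antisymm (le_trans (measure_mono ?_) h0.le) (zero_le)
    exact Set.inter_subset_inter_left K hball
  set E : Set T := ⋃ g : G, g • C with hE
  have hEmeas : MeasurableSet E :=
    MeasurableSet.iUnion fun g => smul_set_measurable hiso hCmeas g
  have hEinv : ∀ g : G, g • E = E := fun g => smul_saturation_eq C g
  have hE'0 : μ' E = 0 :=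
    measure_iUnion_null fun g => by rw [measure_smul_set' μ' hCmeas g]; exact hC'0
  have hCE : C ⊆ E := fun z hz => Set.mem_iUnion.2 ⟨1, by rwa [one_smul]⟩
  have hE0 : μ E ≠ 0 :=
    fun h => hC0 (le_antisymm (le_trans (measure_mono hCE) h.le) (zero_le))
  have hEc : μ Eᶜ = 0 := (herg E hEmeas hEinv).resolve_left hE0
  have hA0 : μ A ≠ 0 := arc_measure_ne_zero hT hKfin μ hA hA1
  have hAE : μ (A ∩ E) ≠ 0 := by
    intro h0'
    apply hA0
    have hsplit : A ⊆ (A ∩ E) ∪ Eᶜ := by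
      intro z hz
      by_cases hzE : z ∈ E
      · exact Or.inl ⟨hz, hzE⟩
      · exact Or.inr hzE
    refine le_antisymm (le_trans (measure_mono hsplit) ?_) (zero_le)
    refine le_trans (measure_union_le _ _) ?_
    rw [h0', hEc]; simp
  have hex : ∃ g : G, μ (A ∩ g • C) ≠ 0 := by
    by_contra hall
    push_neg at hall
    apply hAE
    have : A ∩ E = ⋃ g : G, A ∩ g • C := by rw [hE, Set.inter_iUnion]
    rw [this]
    exact measure_iUnion_null hall
  obtain ⟨g, hg⟩ := hex
  have hDsub : IsSubtree (A ∩ g • C) :=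
    inter_subtree (arc_subtree hT hA)
      (smul_subtree hiso (inter_subtree (ball_subtree hT x ε) hKsub) g)
  rcases Set.subsingleton_or_nontrivial (A ∩ g • C) with hss | hnt
  · obtain ⟨pt, hpt⟩ := nonempty_of_measure_ne_zero hg
    have hsub1 : A ∩ g • C ⊆ {pt} := fun z hz => Set.mem_singleton_iff.2 (hss hz hpt)
    have hatom : μ {pt} ≠ 0 :=
      fun h0' => hg (le_antisymm (le_trans (measure_mono hsub1) h0'.le) (zero_le))
    exact no_atoms hiso hKfin μ hfin herg hA hA1 hatom
  · obtain ⟨u, hu, v, hv, huv⟩ := hnt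
    obtain ⟨f, hf0, hfd, hfiso⟩ := hT.1 u v
    set L : ℝ := dist u v with hL
    have hd : 0 < L := dist_pos.2 huv
    have hB0arc : IsArc (f '' Set.Icc 0 L) := ⟨0, L, f, hd, hfiso, rfl⟩
    have hB0seg : f '' Set.Icc 0 L ⊆ seg u v := by
      rintro _ ⟨s, hs, rfl⟩
      show dist u (f s) + dist (f s) v = dist u v
      rw [← hf0, ← hfd, hfiso 0 ⟨le_refl 0, hd.le⟩ s hs,
        hfiso s hs L ⟨hd.le, le_refl L⟩, hfiso 0 ⟨le_refl 0, hd.le⟩ L ⟨hd.le, le_refl L⟩]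
      have h1 := hs.1
      have h2 := hs.2
      rw [abs_of_nonpos (by linarith), abs_of_nonpos (by linarith),
        abs_of_nonpos (by linarith)]
      ring
    have hB0D : f '' Set.Icc 0 L ⊆ A ∩ g • C := hB0seg.trans (hDsub u hu v hv)
    have hB0supp : f '' Set.Icc 0 L ⊆ suppIn μ' K := fun z hz => hA2 (hB0D hz).1
    refine arc_measure_ne_zero hT hKfin μ' hB0arc hB0supp ?_
    refine le_antisymm (le_trans (measure_mono ?_) hE'0.le) (zero_le)
    exact fun z hz => Set.mem_iUnion.2 ⟨g, (hB0D hz).2⟩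

end Main

end Aux

/-- Two ergodic invariant length measures on an `F_N`-tree with dense orbits whose supports in
a finite supporting subtree `K` are nondegenerate and share a nondegenerate arc have equal
supports in `K`. -/
theorem ergodic_supports_eq_of_overlap
    {T : Type*} [MetricSpace T] [MeasurableSpace T] [BorelSpace T]
    {N : ℕ} [MulAction (FreeGroup (Fin N)) T]
    (hT : IsRTree T) (hiso : ∀ g : FreeGroup (Fin N), Isometry fun x : T => g • x)
    (hdense : ∀ x : T, Dense (MulAction.orbit (FreeGroup (Fin N)) x : Set T))
    (K : Set T) (hKsub : IsSubtree K) (hKfin : IsFiniteSubtree K)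
    (hKsupp : IsSupporting (FreeGroup (Fin N)) K)
    (μ μ' : Measure T)
    [SMulInvariantMeasure (FreeGroup (Fin N)) T μ]
    [SMulInvariantMeasure (FreeGroup (Fin N)) T μ']
    (hfin : ∀ x y : T, μ (seg x y) < ⊤) (hfin' : ∀ x y : T, μ' (seg x y) < ⊤)
    (herg : IsErgodicMeasure (FreeGroup (Fin N)) μ)
    (herg' : IsErgodicMeasure (FreeGroup (Fin N)) μ')
    (hnd : ∃ A : Set T, IsArc A ∧ A ⊆ suppIn μ K)
    (hnd' : ∃ A : Set T, IsArc A ∧ A ⊆ suppIn μ' K)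
    (hoverlap : ∃ A : Set T, IsArc A ∧ A ⊆ suppIn μ K ∩ suppIn μ' K) :
    suppIn μ K = suppIn μ' K := by
  haveI : Countable (FreeGroup (Fin N)) := FreeGroup.toWord_injective.countable
  obtain ⟨A, hA, hAs⟩ := hoverlap
  have h1 : A ⊆ suppIn μ K := fun z hz => (hAs hz).1
  have h2 : A ⊆ suppIn μ' K := fun z hz => (hAs hz).2
  exact Set.Subset.antisymm
    (suppIn_subset_suppIn hT hiso hKsub hKfin μ μ' hfin herg hA h1 h2)
    (suppIn_subset_suppIn hT hiso hKsub hKfin μ' μ hfin' herg' hA h2 h1)
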